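/- For every positive integer q, the weaving square W_{4q} satisfies: (i) for every i ∈ [4q], the set of row entries {W_{4q}(i,j) : j ∈ [4q]} contains two disjoint 1-APs (sets of consecutive integers) each of length q, and likewise the set of column entries {W_{4q}(j,i) : j ∈ [4q]} contains two disjoint 1-APs each of length q; and (ii) for all (i,j) ∈ [4q]×[4q], W_{4q}(i,j) ≤ 8q² if and only if either (i ≤ 2q and j ≤ 2q) or (i > 2q and j > 2q). -/
import Mathlib


namespace Weaving

/-- The four little squares of order `q`, as rotations of the basic square
`L⁰(i,j) = q(i−1)+j` by `0, π/2, π, 3π/2`; indices `i, j` range over `[1, q]`. -/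
def littleSq (q : ℕ) : ℕ → ℕ → ℕ → ℕ
  | 0, i, j => q * (i - 1) + j
  | 1, i, j => q * (q - j) + i
  | 2, i, j => q * (q - i) + (q + 1 - j)
  | _, i, j => q * (j - 1) + (q + 1 - i)

/-- The `4 × 4` base square `B` (1-based indices). -/
def baseSq : ℕ → ℕ → ℕ
  | 1, 1 => 1 | 1, 2 => 6 | 1, 3 => 11 | 1, 4 => 16
  | 2, 1 => 7 | 2, 2 => 4 | 2, 3 => 13 | 2, 4 => 10
  | 3, 1 => 12 | 3, 2 => 15 | 3, 3 => 2 | 3, 4 => 5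
  | 4, 1 => 14 | 4, 2 => 9 | 4, 3 => 8 | 4, 4 => 3
  | _, _ => 0

/-- The weaving square `W_{4q}` with 1-based indices `i, j ∈ [1, 4q]`:
writing `i = q(i₁−1)+i₂`, `j = q(j₁−1)+j₂` with `i₁, j₁ ∈ [4]` and `i₂, j₂ ∈ [q]`,
`W_{4q}(i,j) = (B(i₁,j₁)−1)·q² + L^{(j₁−i₁ mod 4)}(i₂,j₂)`. -/
def weaving (q : ℕ) (i j : ℕ) : ℕ :=
  let i₁ := (i - 1) / q + 1
  let i₂ := (i - 1) % q + 1
  let j₁ := (j - 1) / q + 1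
  let j₂ := (j - 1) % q + 1
  (baseSq i₁ j₁ - 1) * q ^ 2 + littleSq q ((j₁ + 4 - i₁) % 4) i₂ j₂

def IsAP1 (I : Finset ℕ) : Prop := ∃ a b : ℕ, a ≤ b ∧ I = Finset.Icc a b

end Weaving


namespace Weaving

lemma block_bounds (q c t : ℕ) (hc : c + 1 ≤ q) (ht1 : 1 ≤ t) (ht2 : t ≤ q) :
    1 ≤ q * c + t ∧ q * c + t ≤ q ^ 2 := by
  refine ⟨by omega, ?_⟩
  calc q * c + t ≤ q * c + q := by omega
    _ = q * (c + 1) := by ring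
    _ ≤ q * q := Nat.mul_le_mul_left q hc
    _ = q ^ 2 := (sq q).symm

lemma little_bounds (q r i j : ℕ) (hi1 : 1 ≤ i) (hi2 : i ≤ q)
    (hj1 : 1 ≤ j) (hj2 : j ≤ q) : 1 ≤ littleSq q r i j ∧ littleSq q r i j ≤ q^2 := by
  match r with
  | 0 => show 1 ≤ q * (i-1) + j ∧ q * (i-1) + j ≤ q^2
         exact block_bounds q _ _ (by omega) (by omega) (by omega)
  | 1 => show 1 ≤ q * (q-j) + i ∧ q * (q-j) + i ≤ q^2
         exact block_bounds q _ _ (by omega) (by omega) (by omega)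
  | 2 => show 1 ≤ q * (q-i) + (q+1-j) ∧ q * (q-i) + (q+1-j) ≤ q^2
         exact block_bounds q _ _ (by omega) (by omega) (by omega)
  | (n+3) => show 1 ≤ q * (j-1) + (q+1-i) ∧ q * (j-1) + (q+1-i) ≤ q^2
             exact block_bounds q _ _ (by omega) (by omega) (by omega)

lemma weaving_apply (q i₁ i₂ j₁ j₂ : ℕ) (hq : 0 < q) (hi₁ : 1 ≤ i₁) (hj₁ : 1 ≤ j₁)
    (hi₂l : 1 ≤ i₂) (hi₂r : i₂ ≤ q) (hj₂l : 1 ≤ j₂) (hj₂r : j₂ ≤ q) :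
    weaving q (q*(i₁-1)+i₂) (q*(j₁-1)+j₂)
      = (baseSq i₁ j₁ - 1) * q^2 + littleSq q ((j₁+4-i₁)%4) i₂ j₂ := by
  have e1 : q*(i₁-1)+i₂ - 1 = q*(i₁-1)+(i₂-1) := by omega
  have e2 : q*(j₁-1)+j₂ - 1 = q*(j₁-1)+(j₂-1) := by omega
  have hd1 : (q*(i₁-1)+(i₂-1))/q = i₁-1 := by
    rw [Nat.mul_add_div hq, Nat.div_eq_of_lt (by omega), add_zero]
  have hd2 : (q*(j₁-1)+(j₂-1))/q = j₁-1 := by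
    rw [Nat.mul_add_div hq, Nat.div_eq_of_lt (by omega), add_zero]
  have hm1 : (q*(i₁-1)+(i₂-1))%q = i₂-1 := by
    rw [Nat.mul_add_mod, Nat.mod_eq_of_lt (by omega)]
  have hm2 : (q*(j₁-1)+(j₂-1))%q = j₂-1 := by
    rw [Nat.mul_add_mod, Nat.mod_eq_of_lt (by omega)]
  unfold weaving
  simp only [e1, e2, hd1, hd2, hm1, hm2]
  have a1 : i₁ - 1 + 1 = i₁ := by omega
  have a2 : j₁ - 1 + 1 = j₁ := by omega
  have a3 : i₂ - 1 + 1 = i₂ := by omega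
  have a4 : j₂ - 1 + 1 = j₂ := by omega
  rw [a1, a2, a3, a4]

lemma decomp (q i : ℕ) (hq : 0 < q) (h1 : 1 ≤ i) (h2 : i ≤ 4 * q) :
    ∃ i₁ i₂ : ℕ, 1 ≤ i₁ ∧ i₁ ≤ 4 ∧ 1 ≤ i₂ ∧ i₂ ≤ q ∧ i = q * (i₁ - 1) + i₂ := by
  obtain ⟨d, hd⟩ : ∃ d, (i-1)/q = d := ⟨_, rfl⟩
  obtain ⟨m, hm⟩ : ∃ m, (i-1)%q = m := ⟨_, rfl⟩
  have key : q * d + m = i - 1 := by rw [← hd, ← hm]; exact Nat.div_add_mod (i-1) q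
  have hmq : m < q := by rw [← hm]; exact Nat.mod_lt _ hq
  have hd4 : d < 4 := by
    rw [← hd]; exact (Nat.div_lt_iff_lt_mul hq).mpr (by omega)
  obtain ⟨p, hp⟩ : ∃ p, q * d = p := ⟨_, rfl⟩
  rw [hp] at key
  refine ⟨d+1, m+1, by omega, by omega, by omega, by omega, ?_⟩
  simp only [Nat.add_sub_cancel]
  rw [hp]
  omega

lemma pair (q a b : ℕ) (hq : 0 < q) {f : ℕ → ℕ} (hab : a + q < b + 1)
    (h1 : Finset.Icc (a+1) (a+q) ⊆ (Finset.Icc 1 (4*q)).image f)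
    (h2 : Finset.Icc (b+1) (b+q) ⊆ (Finset.Icc 1 (4*q)).image f) :
    ∃ I₁ I₂ : Finset ℕ, IsAP1 I₁ ∧ IsAP1 I₂ ∧ I₁.card = q ∧ I₂.card = q ∧ Disjoint I₁ I₂ ∧
      I₁ ⊆ (Finset.Icc 1 (4*q)).image f ∧ I₂ ⊆ (Finset.Icc 1 (4*q)).image f := by
  refine ⟨_, _, ⟨a+1, a+q, by omega, rfl⟩, ⟨b+1, b+q, by omega, rfl⟩, ?_, ?_, ?_, h1, h2⟩
  · rw [Nat.card_Icc]; omega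
  · rw [Nat.card_Icc]; omega
  · rw [Finset.disjoint_left]
    intro x hx hx'
    rw [Finset.mem_Icc] at hx hx'
    omega

lemma row_sub (q i₁ i₂ j₁ c : ℕ) (hq : 0 < q) (hi₁ : 1 ≤ i₁) (hj₁l : 1 ≤ j₁) (hj₁r : j₁ ≤ 4)
    (hi₂l : 1 ≤ i₂) (hi₂r : i₂ ≤ q)
    (hval : ∀ t, 1 ≤ t → t ≤ q → ∃ j₂, 1 ≤ j₂ ∧ j₂ ≤ q ∧
      (baseSq i₁ j₁ - 1) * q^2 + littleSq q ((j₁+4-i₁)%4) i₂ j₂ = c + t) :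
    Finset.Icc (c+1) (c+q) ⊆ (Finset.Icc 1 (4*q)).image (fun j => weaving q (q*(i₁-1)+i₂) j) := by
  intro x hx
  rw [Finset.mem_Icc] at hx
  obtain ⟨j₂, h1, h2, h3⟩ := hval (x - c) (by omega) (by omega)
  rw [Finset.mem_image]
  refine ⟨q*(j₁-1)+j₂, ?_, ?_⟩
  · rw [Finset.mem_Icc]
    have hmul : q*(j₁-1) ≤ q*3 := Nat.mul_le_mul_left q (by omega)
    obtain ⟨p, hp⟩ : ∃ p, q*(j₁-1) = p := ⟨_, rfl⟩
    rw [hp] at hmul ⊢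
    omega
  · rw [weaving_apply q i₁ i₂ j₁ j₂ hq hi₁ hj₁l hi₂l hi₂r h1 h2, h3]
    omega

lemma col_sub (q c₁ c₂ r₁ c : ℕ) (hq : 0 < q) (hc₁ : 1 ≤ c₁) (hr₁l : 1 ≤ r₁) (hr₁r : r₁ ≤ 4)
    (hc₂l : 1 ≤ c₂) (hc₂r : c₂ ≤ q)
    (hval : ∀ t, 1 ≤ t → t ≤ q → ∃ r₂, 1 ≤ r₂ ∧ r₂ ≤ q ∧
      (baseSq r₁ c₁ - 1) * q^2 + littleSq q ((c₁+4-r₁)%4) r₂ c₂ = c + t) :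
    Finset.Icc (c+1) (c+q) ⊆ (Finset.Icc 1 (4*q)).image (fun j => weaving q j (q*(c₁-1)+c₂)) := by
  intro x hx
  rw [Finset.mem_Icc] at hx
  obtain ⟨r₂, h1, h2, h3⟩ := hval (x - c) (by omega) (by omega)
  rw [Finset.mem_image]
  refine ⟨q*(r₁-1)+r₂, ?_, ?_⟩
  · rw [Finset.mem_Icc]
    have hmul : q*(r₁-1) ≤ q*3 := Nat.mul_le_mul_left q (by omega)
    obtain ⟨p, hp⟩ : ∃ p, q*(r₁-1) = p := ⟨_, rfl⟩
    rw [hp] at hmul ⊢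
    omega
  · rw [weaving_apply q r₁ r₂ c₁ c₂ hq hr₁l hc₁ h1 h2 hc₂l hc₂r, h3]
    omega

lemma part2_core (q i₁ i₂ j₁ j₂ : ℕ) (hq : 0 < q)
    (hi₁l : 1 ≤ i₁) (hi₁r : i₁ ≤ 4) (hj₁l : 1 ≤ j₁) (hj₁r : j₁ ≤ 4)
    (hi₂l : 1 ≤ i₂) (hi₂r : i₂ ≤ q) (hj₂l : 1 ≤ j₂) (hj₂r : j₂ ≤ q) :
    weaving q (q*(i₁-1)+i₂) (q*(j₁-1)+j₂) ≤ 8 * q^2 ↔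
      ((i₁ ≤ 2 ∧ j₁ ≤ 2) ∨ (3 ≤ i₁ ∧ 3 ≤ j₁)) := by
  rw [weaving_apply q i₁ i₂ j₁ j₂ hq hi₁l hj₁l hi₂l hi₂r hj₂l hj₂r]
  obtain ⟨hL1, hL2⟩ := little_bounds q ((j₁+4-i₁)%4) i₂ j₂ hi₂l hi₂r hj₂l hj₂r
  have hB8 : ((i₁ ≤ 2 ∧ j₁ ≤ 2) ∨ (3 ≤ i₁ ∧ 3 ≤ j₁)) ↔ baseSq i₁ j₁ ≤ 8 := by
    interval_cases i₁ <;> interval_cases j₁ <;> decide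
  constructor
  · intro h
    rw [hB8]
    by_contra hB
    have h8 : 8 ≤ baseSq i₁ j₁ - 1 := by omega
    have := Nat.mul_le_mul_right (q^2) h8
    linarith
  · intro hD
    have hB := hB8.mp hD
    have h7 : baseSq i₁ j₁ - 1 ≤ 7 := by omega
    have := Nat.mul_le_mul_right (q^2) h7
    linarith

end Weaving

theorem stmt12 (q : ℕ) (hq : 0 < q) :
    (∀ i ∈ Finset.Icc 1 (4 * q),
      (∃ I₁ I₂ : Finset ℕ, Weaving.IsAP1 I₁ ∧ Weaving.IsAP1 I₂ ∧
        I₁.card = q ∧ I₂.card = q ∧ Disjoint I₁ I₂ ∧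
        I₁ ⊆ (Finset.Icc 1 (4 * q)).image (fun j => Weaving.weaving q i j) ∧
        I₂ ⊆ (Finset.Icc 1 (4 * q)).image (fun j => Weaving.weaving q i j)) ∧
      (∃ I₁ I₂ : Finset ℕ, Weaving.IsAP1 I₁ ∧ Weaving.IsAP1 I₂ ∧
        I₁.card = q ∧ I₂.card = q ∧ Disjoint I₁ I₂ ∧
        I₁ ⊆ (Finset.Icc 1 (4 * q)).image (fun j => Weaving.weaving q j i) ∧
        I₂ ⊆ (Finset.Icc 1 (4 * q)).image (fun j => Weaving.weaving q j i))) ∧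
    (∀ i ∈ Finset.Icc 1 (4 * q), ∀ j ∈ Finset.Icc 1 (4 * q),
      (Weaving.weaving q i j ≤ 8 * q ^ 2 ↔
        (i ≤ 2 * q ∧ j ≤ 2 * q) ∨ (2 * q < i ∧ 2 * q < j))) := by
  constructor
  · intro i hi
    rw [Finset.mem_Icc] at hi
    obtain ⟨i₁, i₂, hl1, hr1, hl, hr, rfl⟩ := Weaving.decomp q i hq hi.1 hi.2
    constructor
    · interval_cases i₁
      · refine Weaving.pair q (0*q^2 + q*(i₂-1)) (10*q^2 + q*(q-i₂)) hq ?_ ?_ ?_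
        · have h := (Weaving.block_bounds q (i₂-1) q (by omega) (by omega) (le_refl q)).2
          linarith [Nat.zero_le (q*(q-i₂)), Nat.zero_le (q*(i₂-1)), Nat.zero_le (q^2)]
        · refine Weaving.row_sub q 1 i₂ 1 _ hq (by norm_num) (by norm_num) (by norm_num) hl hr ?_
          intro t ht1 ht2
          refine ⟨t, ht1, ht2, ?_⟩
          show 0*q^2 + (q*(i₂-1)+t) = 0*q^2 + q*(i₂-1) + t
          ring
        · refine Weaving.row_sub q 1 i₂ 3 _ hq (by norm_num) (by norm_num) (by norm_num) hl hr ?_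
          intro t ht1 ht2
          refine ⟨q+1-t, by omega, by omega, ?_⟩
          have e : q+1-(q+1-t) = t := by omega
          show 10*q^2 + (q*(q-i₂)+(q+1-(q+1-t))) = 10*q^2 + q*(q-i₂) + t
          rw [e]
          ring
      · refine Weaving.pair q (3*q^2 + q*(i₂-1)) (9*q^2 + q*(q-i₂)) hq ?_ ?_ ?_
        · have h := (Weaving.block_bounds q (i₂-1) q (by omega) (by omega) (le_refl q)).2
          linarith [Nat.zero_le (q*(q-i₂)), Nat.zero_le (q*(i₂-1)), Nat.zero_le (q^2)]
        · refine Weaving.row_sub q 2 i₂ 2 _ hq (by norm_num) (by norm_num) (by norm_num) hl hr ?_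
          intro t ht1 ht2
          refine ⟨t, ht1, ht2, ?_⟩
          show 3*q^2 + (q*(i₂-1)+t) = 3*q^2 + q*(i₂-1) + t
          ring
        · refine Weaving.row_sub q 2 i₂ 4 _ hq (by norm_num) (by norm_num) (by norm_num) hl hr ?_
          intro t ht1 ht2
          refine ⟨q+1-t, by omega, by omega, ?_⟩
          have e : q+1-(q+1-t) = t := by omega
          show 9*q^2 + (q*(q-i₂)+(q+1-(q+1-t))) = 9*q^2 + q*(q-i₂) + t
          rw [e]
          ring
      · refine Weaving.pair q (1*q^2 + q*(i₂-1)) (11*q^2 + q*(q-i₂)) hq ?_ ?_ ?_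
        · have h := (Weaving.block_bounds q (i₂-1) q (by omega) (by omega) (le_refl q)).2
          linarith [Nat.zero_le (q*(q-i₂)), Nat.zero_le (q*(i₂-1)), Nat.zero_le (q^2)]
        · refine Weaving.row_sub q 3 i₂ 3 _ hq (by norm_num) (by norm_num) (by norm_num) hl hr ?_
          intro t ht1 ht2
          refine ⟨t, ht1, ht2, ?_⟩
          show 1*q^2 + (q*(i₂-1)+t) = 1*q^2 + q*(i₂-1) + t
          ring
        · refine Weaving.row_sub q 3 i₂ 1 _ hq (by norm_num) (by norm_num) (by norm_num) hl hr ?_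
          intro t ht1 ht2
          refine ⟨q+1-t, by omega, by omega, ?_⟩
          have e : q+1-(q+1-t) = t := by omega
          show 11*q^2 + (q*(q-i₂)+(q+1-(q+1-t))) = 11*q^2 + q*(q-i₂) + t
          rw [e]
          ring
      · refine Weaving.pair q (2*q^2 + q*(i₂-1)) (8*q^2 + q*(q-i₂)) hq ?_ ?_ ?_
        · have h := (Weaving.block_bounds q (i₂-1) q (by omega) (by omega) (le_refl q)).2
          linarith [Nat.zero_le (q*(q-i₂)), Nat.zero_le (q*(i₂-1)), Nat.zero_le (q^2)]
        · refine Weaving.row_sub q 4 i₂ 4 _ hq (by norm_num) (by norm_num) (by norm_num) hl hr ?_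
          intro t ht1 ht2
          refine ⟨t, ht1, ht2, ?_⟩
          show 2*q^2 + (q*(i₂-1)+t) = 2*q^2 + q*(i₂-1) + t
          ring
        · refine Weaving.row_sub q 4 i₂ 2 _ hq (by norm_num) (by norm_num) (by norm_num) hl hr ?_
          intro t ht1 ht2
          refine ⟨q+1-t, by omega, by omega, ?_⟩
          have e : q+1-(q+1-t) = t := by omega
          show 8*q^2 + (q*(q-i₂)+(q+1-(q+1-t))) = 8*q^2 + q*(q-i₂) + t
          rw [e]
          ring
    · interval_cases i₁
      · refine Weaving.pair q (6*q^2 + q*(i₂-1)) (13*q^2 + q*(q-i₂)) hq ?_ ?_ ?_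
        · have h1 := (Weaving.block_bounds q (i₂-1) q (by omega) (by omega) (le_refl q)).2
          have h2 := (Weaving.block_bounds q (q-i₂) q (by omega) (by omega) (le_refl q)).2
          linarith [Nat.zero_le (q*(q-i₂)), Nat.zero_le (q*(i₂-1)), Nat.zero_le (q^2)]
        · refine Weaving.col_sub q 1 i₂ 2 _ hq (by norm_num) (by norm_num) (by norm_num) hl hr ?_
          intro t ht1 ht2
          refine ⟨q+1-t, by omega, by omega, ?_⟩
          have e : q+1-(q+1-t) = t := by omega
          show 6*q^2 + (q*(i₂-1)+(q+1-(q+1-t))) = 6*q^2 + q*(i₂-1) + t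
          rw [e]
          ring
        · refine Weaving.col_sub q 1 i₂ 4 _ hq (by norm_num) (by norm_num) (by norm_num) hl hr ?_
          intro t ht1 ht2
          refine ⟨t, ht1, ht2, ?_⟩
          show 13*q^2 + (q*(q-i₂)+t) = 13*q^2 + q*(q-i₂) + t
          ring
      · refine Weaving.pair q (5*q^2 + q*(q-i₂)) (14*q^2 + q*(i₂-1)) hq ?_ ?_ ?_
        · have h1 := (Weaving.block_bounds q (i₂-1) q (by omega) (by omega) (le_refl q)).2
          have h2 := (Weaving.block_bounds q (q-i₂) q (by omega) (by omega) (le_refl q)).2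
          linarith [Nat.zero_le (q*(q-i₂)), Nat.zero_le (q*(i₂-1)), Nat.zero_le (q^2)]
        · refine Weaving.col_sub q 2 i₂ 1 _ hq (by norm_num) (by norm_num) (by norm_num) hl hr ?_
          intro t ht1 ht2
          refine ⟨t, ht1, ht2, ?_⟩
          show 5*q^2 + (q*(q-i₂)+t) = 5*q^2 + q*(q-i₂) + t
          ring
        · refine Weaving.col_sub q 2 i₂ 3 _ hq (by norm_num) (by norm_num) (by norm_num) hl hr ?_
          intro t ht1 ht2
          refine ⟨q+1-t, by omega, by omega, ?_⟩
          have e : q+1-(q+1-t) = t := by omega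
          show 14*q^2 + (q*(i₂-1)+(q+1-(q+1-t))) = 14*q^2 + q*(i₂-1) + t
          rw [e]
          ring
      · refine Weaving.pair q (7*q^2 + q*(i₂-1)) (12*q^2 + q*(q-i₂)) hq ?_ ?_ ?_
        · have h1 := (Weaving.block_bounds q (i₂-1) q (by omega) (by omega) (le_refl q)).2
          have h2 := (Weaving.block_bounds q (q-i₂) q (by omega) (by omega) (le_refl q)).2
          linarith [Nat.zero_le (q*(q-i₂)), Nat.zero_le (q*(i₂-1)), Nat.zero_le (q^2)]
        · refine Weaving.col_sub q 3 i₂ 4 _ hq (by norm_num) (by norm_num) (by norm_num) hl hr ?_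
          intro t ht1 ht2
          refine ⟨q+1-t, by omega, by omega, ?_⟩
          have e : q+1-(q+1-t) = t := by omega
          show 7*q^2 + (q*(i₂-1)+(q+1-(q+1-t))) = 7*q^2 + q*(i₂-1) + t
          rw [e]
          ring
        · refine Weaving.col_sub q 3 i₂ 2 _ hq (by norm_num) (by norm_num) (by norm_num) hl hr ?_
          intro t ht1 ht2
          refine ⟨t, ht1, ht2, ?_⟩
          show 12*q^2 + (q*(q-i₂)+t) = 12*q^2 + q*(q-i₂) + t
          ring
      · refine Weaving.pair q (4*q^2 + q*(q-i₂)) (15*q^2 + q*(i₂-1)) hq ?_ ?_ ?_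
        · have h1 := (Weaving.block_bounds q (i₂-1) q (by omega) (by omega) (le_refl q)).2
          have h2 := (Weaving.block_bounds q (q-i₂) q (by omega) (by omega) (le_refl q)).2
          linarith [Nat.zero_le (q*(q-i₂)), Nat.zero_le (q*(i₂-1)), Nat.zero_le (q^2)]
        · refine Weaving.col_sub q 4 i₂ 3 _ hq (by norm_num) (by norm_num) (by norm_num) hl hr ?_
          intro t ht1 ht2
          refine ⟨t, ht1, ht2, ?_⟩
          show 4*q^2 + (q*(q-i₂)+t) = 4*q^2 + q*(q-i₂) + t
          ring
        · refine Weaving.col_sub q 4 i₂ 1 _ hq (by norm_num) (by norm_num) (by norm_num) hl hr ?_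
          intro t ht1 ht2
          refine ⟨q+1-t, by omega, by omega, ?_⟩
          have e : q+1-(q+1-t) = t := by omega
          show 15*q^2 + (q*(i₂-1)+(q+1-(q+1-t))) = 15*q^2 + q*(i₂-1) + t
          rw [e]
          ring
  · intro i hi j hj
    rw [Finset.mem_Icc] at hi hj
    obtain ⟨i₁, i₂, hil1, hir1, hil, hir, rfl⟩ := Weaving.decomp q i hq hi.1 hi.2
    obtain ⟨j₁, j₂, hjl1, hjr1, hjl, hjr, rfl⟩ := Weaving.decomp q j hq hj.1 hj.2
    rw [Weaving.part2_core q i₁ i₂ j₁ j₂ hq hil1 hir1 hjl1 hjr1 hil hir hjl hjr]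
    interval_cases i₁ <;> interval_cases j₁ <;> omega
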